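/- Let g:[a,b]→[0,∞) be increasing and left-continuous, and let f be Lebesgue–Stieltjes integrable with respect to g on [a,b). Then the Lebesgue–Stieltjes integral of f over [a,b) equals the Kurzweil–Stieltjes integral ∫_a^b f dg. -/

import Mathlib

open Set MeasureTheory

/-- Right jump of a function: `u(t⁺) - u(t)`. -/
noncomputable def rjump (u : ℝ → ℝ) (t : ℝ) : ℝ := Function.rightLim u t - u t

/-- Cumulative jump part of `u` on `[a, t)`: `u^B(t) = Σ_{s ∈ [a,t)} Δ⁺u(s)`. -/
noncomputable def jumpPart (u : ℝ → ℝ) (a t : ℝ) : ℝ :=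
  ∑' s : ℝ, Set.indicator (Set.Ico a t) (fun v => rjump u v) s

/-- Continuous part of `u` (relative to the base point `a`): `u^C = u - u^B`. -/
noncomputable def contPart (u : ℝ → ℝ) (a t : ℝ) : ℝ := u t - jumpPart u a t

/-- `I` is the Kurzweil–Stieltjes integral `∫_a^b f dg`: for every `ε > 0` there is a
gauge `δ` such that every `δ`-fine tagged partition of `[a,b]` has Riemann–Stieltjes
sum within `ε` of `I`. -/
def IsKSIntegral (f g : ℝ → ℝ) (a b I : ℝ) : Prop :=
  ∀ ε > (0:ℝ), ∃ δ : ℝ → ℝ, (∀ x, 0 < δ x) ∧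
    ∀ (n : ℕ) (t ξ : ℕ → ℝ),
      t 0 = a → t n = b →
      (∀ i < n, t i < t (i + 1)) →
      (∀ i < n, t i ≤ ξ i ∧ ξ i ≤ t (i + 1)) →
      (∀ i < n, ξ i - δ (ξ i) < t i ∧ t (i + 1) < ξ i + δ (ξ i)) →
      |(∑ i ∈ Finset.range n, f (ξ i) * (g (t (i + 1)) - g (t i))) - I| < ε

/-- `f` is `g`-Lipschitz continuous on `[a,b]` with constant `H`. -/
def GLipschitzOn (f g : ℝ → ℝ) (H a b : ℝ) : Prop :=
  ∀ t ∈ Set.Icc a b, ∀ s ∈ Set.Icc a b, |f t - f s| ≤ H * |g t - g s|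

/-- `g` is left-continuous at every point of `s`. -/
def LeftContOn (g : ℝ → ℝ) (s : Set ℝ) : Prop :=
  ∀ t ∈ s, Filter.Tendsto g (nhdsWithin t (Set.Iio t)) (nhds (g t))

open BoxIntegral

/-- If `g : [a,b] → [0,∞)` is increasing and left-continuous, `μ` is its
Lebesgue–Stieltjes measure (`μ [c,d) = g d - g c`), and `f` is `μ`-integrable on `[a,b)`,
then the Lebesgue–Stieltjes integral of `f` over `[a,b)` equals the
Kurzweil–Stieltjes integral `∫_a^b f dg`. -/
theorem lebesgueStieltjes_eq_kurzweilStieltjes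
    (a b : ℝ) (hab : a < b) (g : ℝ → ℝ)
    (hg : MonotoneOn g (Set.Icc a b))
    (hg0 : ∀ t ∈ Set.Icc a b, 0 ≤ g t)
    (hglc : LeftContOn g (Set.Ioo a b))
    (μ : Measure ℝ)
    (hμ : ∀ c d : ℝ, a ≤ c → c ≤ d → d ≤ b →
      μ (Set.Ico c d) = ENNReal.ofReal (g d - g c))
    (f : ℝ → ℝ) (hf : IntegrableOn f (Set.Ico a b) μ) :
    IsKSIntegral f g a b (∫ x in Set.Ico a b, f x ∂μ) := by
  classical
  set ψ : ℝ ≃ᵐ (Fin 1 → ℝ) :=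
    (MeasurableEquiv.neg ℝ).trans (MeasurableEquiv.funUnique (Fin 1) ℝ).symm with hψdef
  have hψ : ∀ (x : ℝ) (k : Fin 1), ψ x k = -x := by intro x k; rfl
  set μ' := μ.restrict (Set.Ico a b) with hμ'def
  have hμ'Ico : ∀ c d : ℝ, a ≤ c → c ≤ d → d ≤ b →
      μ' (Set.Ico c d) = ENNReal.ofReal (g d - g c) := by
    intro c d hac hcd hdb
    rw [hμ'def, Measure.restrict_apply measurableSet_Ico,
      Set.inter_eq_left.mpr (Set.Ico_subset_Ico hac hdb), hμ c d hac hcd hdb]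
  set ν : Measure (Fin 1 → ℝ) := μ'.map ψ with hνdef
  have hν : ∀ s : Set (Fin 1 → ℝ), ν s = μ' (ψ ⁻¹' s) := fun s => ψ.map_apply s
  haveI hνfin : IsFiniteMeasure ν := by
    constructor
    rw [hν, Set.preimage_univ, hμ'def, Measure.restrict_apply_univ, hμ a b le_rfl hab.le le_rfl]
    exact ENNReal.ofReal_lt_top
  have hJl : ∀ k : Fin 1, (fun _ : Fin 1 => -b) k < (fun _ : Fin 1 => -a) k := fun _ => by
    simpa using hab
  set J : Box (Fin 1) := ⟨fun _ => -b, fun _ => -a, hJl⟩ with hJdef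
  have hJpre : ψ ⁻¹' (↑J : Set (Fin 1 → ℝ)) = Set.Ico a b := by
    ext x
    simp only [Set.mem_preimage, Box.mem_coe, Box.mem_def, hψ, Fin.forall_fin_one,
      Set.mem_Ioc, Set.mem_Ico, hJdef]
    constructor <;> rintro ⟨h1, h2⟩ <;> constructor <;> linarith
  set F : (Fin 1 → ℝ) → ℝ := fun y => f (ψ.symm y) with hFdef
  have hFψ : ∀ x, F (ψ x) = f x := fun x => by rw [hFdef]; simp
  have hFint : IntegrableOn F (↑J) ν := by
    have hI : Integrable F ν := by
      rw [hνdef, integrable_map_equiv ψ F]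
      have hFf : F ∘ ψ = f := funext hFψ
      rw [hFf]; exact hf
    exact hI.integrableOn
  have hcompl : ν (↑J)ᶜ = 0 := by
    rw [hν, Set.preimage_compl, hJpre, hμ'def,
      Measure.restrict_apply (measurableSet_Ico.compl), Set.compl_inter_self]
    exact measure_empty
  have hνJ : ν.restrict ↑J = ν := by
    apply Measure.restrict_eq_self_of_ae_mem
    rw [Filter.eventually_iff, mem_ae_iff]
    exact hcompl
  have hval : ∫ y in (↑J : Set (Fin 1 → ℝ)), F y ∂ν = ∫ x in Set.Ico a b, f x ∂μ := by
    rw [show (∫ y in (↑J : Set (Fin 1 → ℝ)), F y ∂ν) = ∫ y, F y ∂ν from by rw [hνJ]]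
    rw [hνdef, MeasureTheory.integral_map_equiv]
    simp only [hFψ]
    rw [hμ'def]
  have hbox := hFint.hasBoxIntegral IntegrationParams.McShane rfl
  rw [hval] at hbox
  intro ε hε
  obtain ⟨r, -, hr⟩ := BoxIntegral.hasIntegral_iff.1 hbox (ε/2) (by positivity)
  refine ⟨fun x => r 0 (ψ x), fun x => (r 0 (ψ x)).2, ?_⟩
  intro n t ξ ht0 htn hlt htag hfine
  -- monotonicity of the partition points
  have hmono : ∀ j, j ≤ n → ∀ i, i ≤ j → t i ≤ t j := by
    intro j
    induction j with
    | zero => intro _ i hi; interval_cases i; exact le_rfl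
    | succ j ih =>
      intro hj i hi
      rcases Nat.eq_or_lt_of_le hi with h | h
      · rw [h]
      · exact (ih (by omega) i (by omega)).trans (hlt j (by omega)).le
  have hstrict : ∀ i j, i < j → j ≤ n → t i < t j := fun i j hij hjn =>
    lt_of_lt_of_le (hlt i (by omega)) (hmono j hjn (i+1) hij)
  have hta : ∀ i, i ≤ n → a ≤ t i := fun i hi => ht0 ▸ hmono i hi 0 (Nat.zero_le _)
  have htb : ∀ i, i ≤ n → t i ≤ b := fun i hi => htn ▸ hmono n le_rfl i hi
  -- the boxes
  have hBlt : ∀ i : Fin n, ∀ k : Fin 1,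
      (fun _ : Fin 1 => -t ((i:ℕ)+1)) k < (fun _ : Fin 1 => -t (i:ℕ)) k := fun i k => by
    simpa using hlt i i.2
  set B : Fin n → Box (Fin 1) := fun i => ⟨fun _ => -t ((i:ℕ)+1), fun _ => -t (i:ℕ), hBlt i⟩
    with hBdef
  have hmemB : ∀ (i : Fin n) (y : Fin 1 → ℝ),
      y ∈ B i ↔ (-t ((i:ℕ)+1) < y 0 ∧ y 0 ≤ -t (i:ℕ)) := by
    intro i y
    rw [Box.mem_def]
    constructor
    · intro h; exact h 0
    · intro h k; have hk : k = 0 := Subsingleton.elim _ _; rw [hk]; exact h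
  have hBinj : Function.Injective B := by
    intro i j hij
    have h1 : -t (i:ℕ) = -t (j:ℕ) := congrFun (congrArg Box.upper hij) 0
    rcases lt_trichotomy (i:ℕ) (j:ℕ) with h | h | h
    · exact absurd (hstrict _ _ h j.2.le) (by simp; linarith)
    · exact Fin.ext h
    · exact absurd (hstrict _ _ h i.2.le) (by simp; linarith)
  have hBle : ∀ i : Fin n, B i ≤ J := by
    intro i
    rw [Box.le_iff_bounds]
    have h1 : t ((i:ℕ)+1) ≤ b := htb _ i.2
    have h2 : a ≤ t (i:ℕ) := hta _ i.2.le
    constructor <;> intro k <;> simp [hBdef, hJdef] <;> linarith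
  have hBdisj : ∀ i j : Fin n, i ≠ j →
      Disjoint (↑(B i) : Set (Fin 1 → ℝ)) ↑(B j) := by
    have key : ∀ i j : Fin n, (i:ℕ) < (j:ℕ) →
        Disjoint (↑(B i) : Set (Fin 1 → ℝ)) ↑(B j) := by
      intro i j hij
      rw [Set.disjoint_left]
      intro y hyi hyj
      have h1 := (hmemB i y).1 hyi
      have h2 := (hmemB j y).1 hyj
      have h3 : t ((i:ℕ)+1) ≤ t (j:ℕ) := hmono _ j.2.le _ hij
      linarith [h1.1, h2.2]
    intro i j hne
    rcases lt_trichotomy (i:ℕ) (j:ℕ) with h | h | h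
    · exact key i j h
    · exact absurd (Fin.ext h) hne
    · exact (key j i h).symm
  set P : Prepartition J :=
    ⟨Finset.image B Finset.univ,
     by
       intro K hK
       rcases Finset.mem_image.1 hK with ⟨i, -, rfl⟩
       exact hBle i,
     by
       intro K hK K' hK' hne
       rcases Finset.mem_image.1 (Finset.mem_coe.1 hK) with ⟨i, -, rfl⟩
       rcases Finset.mem_image.1 (Finset.mem_coe.1 hK') with ⟨j, -, rfl⟩
       exact hBdisj i j (fun h => hne (by rw [h]))⟩ with hPdef
  set tg : Box (Fin 1) → (Fin 1 → ℝ) := fun K =>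
    if h : ∃ i : Fin n, B i = K then ψ (ξ (Classical.choose h : Fin n)) else ψ b with htgdef
  have hξmem : ∀ i : Fin n, a ≤ ξ (i:ℕ) ∧ ξ (i:ℕ) ≤ b := fun i =>
    ⟨(hta _ i.2.le).trans (htag i i.2).1, (htag i i.2).2.trans (htb _ i.2)⟩
  have htg_memIcc : ∀ K, tg K ∈ Box.Icc J := by
    intro K
    rw [Box.Icc_def, Set.mem_Icc]
    simp only [htgdef]
    split_ifs with h
    · obtain ⟨h1, h2⟩ := hξmem (Classical.choose h)
      constructor <;> intro k <;> simp [hψ, hJdef] <;> linarith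
    · constructor <;> intro k <;> simp [hψ, hJdef] <;> linarith
  set π : TaggedPrepartition J := ⟨P, tg, htg_memIcc⟩ with hπdef
  have htg_B : ∀ i : Fin n, tg (B i) = ψ (ξ (i:ℕ)) := by
    intro i
    have h : ∃ j : Fin n, B j = B i := ⟨i, rfl⟩
    rw [htgdef]
    simp only [dif_pos h]
    rw [hBinj (Classical.choose_spec h)]
  have hmem : IntegrationParams.McShane.MemBaseSet J 0 (r 0) π := by
    refine ⟨?_, ?_, ?_, ?_⟩
    · intro K hK
      rcases Finset.mem_image.1 hK with ⟨i, -, rfl⟩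
      have htag_eq : π.tag (B i) = ψ (ξ (i:ℕ)) := htg_B i
      rw [htag_eq]
      intro y hy
      rw [Box.Icc_def, Set.mem_Icc] at hy
      rw [Metric.mem_closedBall, dist_pi_le_iff (le_of_lt (r 0 (ψ (ξ (i:ℕ)))).2)]
      intro k
      have hy1 : -t ((i:ℕ)+1) ≤ y k := hy.1 k
      have hy2 : y k ≤ -t (i:ℕ) := hy.2 k
      have hf1 := (hfine i i.2).1
      have hf2 := (hfine i i.2).2
      rw [Real.dist_eq, hψ, abs_le]
      constructor <;> linarith
    · intro h; exact absurd h (by simp [IntegrationParams.McShane])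
    · intro h; exact absurd h (by simp [IntegrationParams.McShane])
    · intro h; exact absurd h (by simp [IntegrationParams.McShane])
  have hpart : π.IsPartition := by
    intro y hy
    have hy0 : -b < y 0 ∧ y 0 ≤ -a := by
      rw [Box.mem_def] at hy; exact hy 0
    have hax : a ≤ -(y 0) := by linarith [hy0.2]
    have hxb : -(y 0) < b := by linarith [hy0.1]
    set x := -(y 0) with hx
    set i := Nat.findGreatest (fun j => t j ≤ x) n with hidef
    have hP0 : t 0 ≤ x := by rw [ht0]; exact hax
    have hile : i ≤ n := Nat.findGreatest_le n
    have hti : t i ≤ x := by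
      have h := Nat.findGreatest_spec (P := fun j => t j ≤ x) (Nat.zero_le n) hP0
      rw [hidef]; exact h
    have hin : i < n := by
      rcases Nat.lt_or_ge i n with h | h
      · exact h
      · have hxb' : x < t i := by
          have : i = n := le_antisymm hile h
          rw [this, htn]; exact hxb
        linarith
    have hxlt : x < t (i+1) := by
      by_contra hcon
      push_neg at hcon
      exact Nat.findGreatest_is_greatest (P := fun j => t j ≤ x)
        (by rw [← hidef]; exact Nat.lt_succ_self i) hin hcon
    refine ⟨B ⟨i, hin⟩, Finset.mem_image.2 ⟨⟨i, hin⟩, Finset.mem_univ _, rfl⟩, ?_⟩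
    rw [hmemB]
    constructor <;> simp only [] <;> linarith
  have hsum := hr 0 π hmem hpart
  have hνB : ∀ i : Fin n, ν ↑(B i) = ENNReal.ofReal (g (t ((i:ℕ)+1)) - g (t (i:ℕ))) := by
    intro i
    rw [hν]
    have hpre : ψ ⁻¹' (↑(B i) : Set (Fin 1 → ℝ)) = Set.Ico (t (i:ℕ)) (t ((i:ℕ)+1)) := by
      ext x
      rw [Set.mem_preimage, Box.mem_coe, hmemB, hψ, Set.mem_Ico]
      constructor <;> rintro ⟨h1, h2⟩ <;> constructor <;> linarith
    rw [hpre, hμ'Ico _ _ (hta _ i.2.le) (hlt i i.2).le (htb _ i.2)]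
  have hsum_eq : integralSum F ν.toBoxAdditive.toSMul π
      = ∑ i ∈ Finset.range n, f (ξ i) * (g (t (i+1)) - g (t i)) := by
    have h0 : integralSum F ν.toBoxAdditive.toSMul π
        = ∑ K ∈ Finset.image B Finset.univ, ν.toBoxAdditive.toSMul K (F (π.tag K)) := rfl
    refine h0.trans ?_
    rw [Finset.sum_image (fun i _ j _ h => hBinj h), ← Fin.sum_univ_eq_sum_range]
    apply Finset.sum_congr rfl
    intro i _
    have htag_eq : π.tag (B i) = ψ (ξ (i:ℕ)) := htg_B i
    rw [htag_eq, hFψ, BoxAdditiveMap.toSMul_apply, Measure.toBoxAdditive_apply, measureReal_def, hνB i,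
      ENNReal.toReal_ofReal]
    · rw [smul_eq_mul]; ring
    · have h1 : t (i:ℕ) ∈ Set.Icc a b := ⟨hta _ i.2.le, htb _ i.2.le⟩
      have h2 : t ((i:ℕ)+1) ∈ Set.Icc a b := ⟨hta _ i.2, htb _ i.2⟩
      have := hg h1 h2 (hlt i i.2).le
      linarith
  rw [hsum_eq, Real.dist_eq] at hsum
  exact lt_of_le_of_lt hsum (by linarith)
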